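/- For nonnegative integers h ≥ k and a complex number z, the squared modulus of the overlap ⟨ξ,h|μ,k⟩ of two displaced number states with z = μ − ξ equals (k!/h!)·|z|^(2(h−k))·e^(−|z|²)·[L_k^{(h−k)}(|z|²)]², where L_k^{(a)} is the generalized Laguerre polynomial. In particular this quantity always lies in the interval [0,1]. -/

import Mathlib

set_option maxHeartbeats 1000000

open Finset

/-- Generalized Laguerre polynomial `L_k^{(a)}(x) = ∑_{i=0}^k (-1)^i C(k+a, k-i) x^i / i!`. -/
noncomputable def lag (k a : ℕ) (x : ℝ) : ℝ :=
  ∑ i ∈ Finset.range (k + 1), (-1 : ℝ) ^ i * ((k + a).choose (k - i)) * x ^ i / (Nat.factorial i)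

private lemma exp_tsum (y : ℝ) : ∑' n : ℕ, y ^ n / (Nat.factorial n) = Real.exp y := by
  rw [Real.exp_eq_exp_ℝ, NormedSpace.exp_eq_tsum_div]

private lemma sumRC_summable (r : ℕ) (y : ℝ) :
    Summable (fun j : ℕ => (j.choose r : ℝ) * y ^ j / (Nat.factorial j)) := by
  rw [← summable_nat_add_iff r]
  have h : (fun j : ℕ => ((j + r).choose r : ℝ) * y ^ (j + r) / (Nat.factorial (j + r)))
      = fun j : ℕ => (y ^ r / Nat.factorial r) * (y ^ j / Nat.factorial j) := by
    funext j
    rw [Nat.cast_choose ℝ (Nat.le_add_left r j), Nat.add_sub_cancel]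
    have h1 : (Nat.factorial (j + r) : ℝ) ≠ 0 := by positivity
    have h2 : (Nat.factorial r : ℝ) ≠ 0 := by positivity
    have h3 : (Nat.factorial j : ℝ) ≠ 0 := by positivity
    field_simp
    ring
  rw [h]
  exact (Real.summable_pow_div_factorial y).mul_left _

private lemma sumRC (r : ℕ) (y : ℝ) :
    ∑' j : ℕ, (j.choose r : ℝ) * y ^ j / (Nat.factorial j)
      = y ^ r / Nat.factorial r * Real.exp y := by
  have hs := sumRC_summable r y
  rw [← Summable.sum_add_tsum_nat_add r hs]
  have h0 : ∑ j ∈ range r, (j.choose r : ℝ) * y ^ j / (Nat.factorial j) = 0 := by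
    apply Finset.sum_eq_zero
    intro j hj
    rw [Nat.choose_eq_zero_of_lt (mem_range.mp hj)]
    simp
  have h : (fun j : ℕ => ((j + r).choose r : ℝ) * y ^ (j + r) / (Nat.factorial (j + r)))
      = fun j : ℕ => (y ^ r / Nat.factorial r) * (y ^ j / Nat.factorial j) := by
    funext j
    rw [Nat.cast_choose ℝ (Nat.le_add_left r j), Nat.add_sub_cancel]
    have h1 : (Nat.factorial (j + r) : ℝ) ≠ 0 := by positivity
    have h2 : (Nat.factorial r : ℝ) ≠ 0 := by positivity
    have h3 : (Nat.factorial j : ℝ) ≠ 0 := by positivity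
    field_simp
    ring
  rw [h0, zero_add, h, tsum_mul_left, exp_tsum]

noncomputable def gg (t : ℝ) (m H : ℕ) : ℝ :=
  if m ≤ H then t ^ (H - m) / Nat.factorial (H - m) else 0

noncomputable def SS (t : ℝ) (m n : ℕ) : ℝ :=
  ∑ i ∈ range (m + 1),
    (m.choose i : ℝ) * (n.choose i) * Nat.factorial i * t ^ (m - i) * t ^ (n - i)

noncomputable def SSk (k : ℕ) (t : ℝ) (m n : ℕ) : ℝ :=
  ∑ i ∈ range (k + 1),
    (m.choose i : ℝ) * (n.choose i) * Nat.factorial i * t ^ (m - i) * t ^ (n - i)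

noncomputable def ww (k : ℕ) (t : ℝ) (m : ℕ) : ℝ :=
  (-1) ^ (k - m) * (k.choose m : ℝ) * t ^ (k - m)

noncomputable def uu (k : ℕ) (t : ℝ) (m i : ℕ) : ℝ :=
  ww k t m * (m.choose i : ℝ) * t ^ (m - i)

noncomputable def cc (k : ℕ) (t : ℝ) (H : ℕ) : ℝ :=
  ∑ m ∈ range (k + 1), ww k t m * gg t m H

private lemma shift_eq (t : ℝ) {m n : ℕ} (hmn : m ≤ n) (j : ℕ) :
    (Nat.factorial (j + n) : ℝ) * (gg t m (j + n) * gg t n (j + n))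
      = ∑ p ∈ Finset.HasAntidiagonal.antidiagonal m,
          ((Nat.factorial m : ℝ) * (n.choose p.2) * t ^ (n - m)) *
            ((j.choose p.1 : ℝ) * (t ^ 2) ^ j / Nat.factorial j) := by
  have hv : ((j + n).choose m : ℝ)
      = ∑ p ∈ Finset.HasAntidiagonal.antidiagonal m, (j.choose p.1 : ℝ) * (n.choose p.2) := by
    exact_mod_cast congrArg (fun x : ℕ => (x : ℝ)) (Nat.add_choose_eq j n m)
  have hstep : ∑ p ∈ Finset.HasAntidiagonal.antidiagonal m,
          ((Nat.factorial m : ℝ) * (n.choose p.2) * t ^ (n - m)) *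
            ((j.choose p.1 : ℝ) * (t ^ 2) ^ j / Nat.factorial j)
      = ∑ p ∈ Finset.HasAntidiagonal.antidiagonal m, ((j.choose p.1 : ℝ) * (n.choose p.2)) *
          ((Nat.factorial m : ℝ) * t ^ (n - m) * ((t ^ 2) ^ j / Nat.factorial j)) :=
    Finset.sum_congr rfl (fun p _ => by ring)
  rw [hstep, ← Finset.sum_mul, ← hv]
  simp only [gg, if_pos (show m ≤ j + n by omega), if_pos (show n ≤ j + n by omega)]
  rw [Nat.cast_choose ℝ (show m ≤ j + n by omega)]
  have hpow : t ^ (n - m) * (t ^ 2) ^ j = t ^ (j + n - m) * t ^ j := by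
    rw [← pow_mul, ← pow_add, ← pow_add]
    congr 1
    omega
  have h1 : (Nat.factorial (j + n - m) : ℝ) ≠ 0 := by positivity
  have h2 : (Nat.factorial m : ℝ) ≠ 0 := by positivity
  have h3 : (Nat.factorial j : ℝ) ≠ 0 := by positivity
  field_simp
  rw [Nat.add_sub_cancel]
  linear_combination (-(Nat.factorial j : ℝ)) * hpow

private lemma lemA_summable' (t : ℝ) {m n : ℕ} (hmn : m ≤ n) :
    Summable (fun H : ℕ => (Nat.factorial H : ℝ) * (gg t m H * gg t n H)) := by
  rw [← summable_nat_add_iff n]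
  have : (fun j : ℕ => (Nat.factorial (j + n) : ℝ) * (gg t m (j + n) * gg t n (j + n)))
      = fun j : ℕ => ∑ p ∈ Finset.HasAntidiagonal.antidiagonal m,
          ((Nat.factorial m : ℝ) * (n.choose p.2) * t ^ (n - m)) *
            ((j.choose p.1 : ℝ) * (t ^ 2) ^ j / Nat.factorial j) :=
    funext (shift_eq t hmn)
  rw [this]
  exact summable_sum (fun p _ => (sumRC_summable p.1 (t ^ 2)).mul_left _)

private lemma lemA_tsum' (t : ℝ) {m n : ℕ} (hmn : m ≤ n) :
    ∑' H : ℕ, (Nat.factorial H : ℝ) * (gg t m H * gg t n H)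
      = Real.exp (t ^ 2) * SS t m n := by
  have hs := lemA_summable' t hmn
  rw [← Summable.sum_add_tsum_nat_add n hs]
  have h0 : ∑ H ∈ range n, (Nat.factorial H : ℝ) * (gg t m H * gg t n H) = 0 := by
    apply Finset.sum_eq_zero
    intro H hH
    have hHn : H < n := mem_range.mp hH
    have : gg t n H = 0 := by
      simp only [gg, if_neg (by omega : ¬ n ≤ H)]
    rw [this]; ring
  rw [h0, zero_add]
  have heq : (fun j : ℕ => (Nat.factorial (j + n) : ℝ) * (gg t m (j + n) * gg t n (j + n)))
      = fun j : ℕ => ∑ p ∈ Finset.HasAntidiagonal.antidiagonal m,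
          ((Nat.factorial m : ℝ) * (n.choose p.2) * t ^ (n - m)) *
            ((j.choose p.1 : ℝ) * (t ^ 2) ^ j / Nat.factorial j) :=
    funext (shift_eq t hmn)
  rw [heq]
  rw [Summable.tsum_finsetSum (f := fun (p : ℕ × ℕ) (j : ℕ) =>
      ((Nat.factorial m : ℝ) * (n.choose p.2) * t ^ (n - m)) *
        ((j.choose p.1 : ℝ) * (t ^ 2) ^ j / Nat.factorial j))
    (s := Finset.HasAntidiagonal.antidiagonal m)
    (fun p _ => (sumRC_summable p.1 (t ^ 2)).mul_left _)]
  have hterm : ∀ p ∈ Finset.HasAntidiagonal.antidiagonal m,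
      ∑' j : ℕ, ((Nat.factorial m : ℝ) * (n.choose p.2) * t ^ (n - m)) *
          ((j.choose p.1 : ℝ) * (t ^ 2) ^ j / Nat.factorial j)
        = ((Nat.factorial m : ℝ) * (n.choose p.2) * t ^ (n - m)) *
            ((t ^ 2) ^ p.1 / Nat.factorial p.1 * Real.exp (t ^ 2)) := by
    intro p _
    rw [tsum_mul_left, sumRC]
  rw [Finset.sum_congr rfl hterm]
  rw [Finset.Nat.sum_antidiagonal_eq_sum_range_succ
    (fun r s => ((Nat.factorial m : ℝ) * (n.choose s) * t ^ (n - m)) *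
            ((t ^ 2) ^ r / Nat.factorial r * Real.exp (t ^ 2)))]
  unfold SS
  rw [← Finset.sum_range_reflect
    (fun i => (m.choose i : ℝ) * (n.choose i) * Nat.factorial i * t ^ (m - i) * t ^ (n - i)) (m+1)]
  rw [Finset.mul_sum]
  apply Finset.sum_congr rfl
  intro r hr
  have hrm : r ≤ m := by have := mem_range.mp hr; omega
  simp only [Nat.add_sub_cancel]
  rw [show m - (m - r) = r from by omega]
  have hp2 : t ^ (n - m) * (t ^ 2) ^ r = t ^ r * t ^ (n - (m - r)) := by
    rw [← pow_mul, ← pow_add, ← pow_add]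
    congr 1
    omega
  have hcf' : (Nat.factorial m : ℝ)
      = (m.choose (m - r) : ℝ) * Nat.factorial (m - r) * Nat.factorial r := by
    have := Nat.choose_mul_factorial_mul_factorial (show m - r ≤ m by omega)
    rw [show m - (m - r) = r from by omega] at this
    exact_mod_cast this.symm
  have h1 : (Nat.factorial r : ℝ) ≠ 0 := by positivity
  calc (Nat.factorial m : ℝ) * (n.choose (m - r)) * t ^ (n - m) *
        ((t ^ 2) ^ r / Nat.factorial r * Real.exp (t ^ 2))
      = (Nat.factorial m : ℝ) * (n.choose (m - r)) * (t ^ (n - m) * (t ^ 2) ^ r) *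
        Real.exp (t ^ 2) / Nat.factorial r := by ring
    _ = ((m.choose (m - r) : ℝ) * Nat.factorial (m - r) * Nat.factorial r) * (n.choose (m - r)) *
        (t ^ r * t ^ (n - (m - r))) * Real.exp (t ^ 2) / Nat.factorial r := by rw [← hcf', ← hp2]
    _ = Real.exp (t ^ 2) * ((m.choose (m - r) : ℝ) * (n.choose (m - r)) *
        Nat.factorial (m - r) * t ^ r * t ^ (n - (m - r))) := by
        field_simp

private lemma SS_eq_SSk (t : ℝ) {k m n : ℕ} (hm : m ≤ k) :
    SS t m n = SSk k t m n := by
  unfold SS SSk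
  apply Finset.sum_subset
  · exact Finset.range_subset_range.mpr (by omega)
  · intro i _ hi
    have : m < i := by simp only [mem_range] at hi; omega
    rw [Nat.choose_eq_zero_of_lt this]
    ring

private lemma SSk_symm (k : ℕ) (t : ℝ) (m n : ℕ) : SSk k t m n = SSk k t n m :=
  Finset.sum_congr rfl (fun i _ => by ring)

private lemma lemA_summable (t : ℝ) (m n : ℕ) :
    Summable (fun H : ℕ => (Nat.factorial H : ℝ) * (gg t m H * gg t n H)) := by
  rcases le_total m n with hmn | hnm
  · exact lemA_summable' t hmn
  · have := lemA_summable' t hnm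
    simpa [mul_comm] using this

private lemma lemA_tsum (t : ℝ) {k m n : ℕ} (hm : m ≤ k) (hn : n ≤ k) :
    ∑' H : ℕ, (Nat.factorial H : ℝ) * (gg t m H * gg t n H)
      = Real.exp (t ^ 2) * SSk k t m n := by
  rcases le_total m n with hmn | hnm
  · rw [lemA_tsum' t hmn, SS_eq_SSk t hm]
  · have h := lemA_tsum' t hnm
    have hcomm : (fun H : ℕ => (Nat.factorial H : ℝ) * (gg t m H * gg t n H))
        = fun H : ℕ => (Nat.factorial H : ℝ) * (gg t n H * gg t m H) := by
      funext H; ring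
    rw [hcomm, h, SS_eq_SSk t hn, SSk_symm]

private lemma cc_sq_expand (k : ℕ) (t : ℝ) (H : ℕ) :
    (Nat.factorial H : ℝ) * (cc k t H) ^ 2
      = ∑ m ∈ range (k + 1), ∑ n ∈ range (k + 1),
          (ww k t m * ww k t n) * ((Nat.factorial H : ℝ) * (gg t m H * gg t n H)) := by
  unfold cc
  rw [sq, Finset.sum_mul_sum]
  rw [Finset.mul_sum]
  apply Finset.sum_congr rfl
  intro m _
  rw [Finset.mul_sum]
  apply Finset.sum_congr rfl
  intro n _
  ring

private lemma main_summable (k : ℕ) (t : ℝ) :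
    Summable (fun H : ℕ => (Nat.factorial H : ℝ) * (cc k t H) ^ 2) := by
  have : (fun H : ℕ => (Nat.factorial H : ℝ) * (cc k t H) ^ 2)
      = fun H => ∑ m ∈ range (k + 1), ∑ n ∈ range (k + 1),
          (ww k t m * ww k t n) * ((Nat.factorial H : ℝ) * (gg t m H * gg t n H)) :=
    funext (cc_sq_expand k t)
  rw [this]
  exact summable_sum (fun m _ => summable_sum (fun n _ => (lemA_summable t m n).mul_left _))

private lemma main_tsum (k : ℕ) (t : ℝ) :
    ∑' H : ℕ, (Nat.factorial H : ℝ) * (cc k t H) ^ 2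
      = Real.exp (t ^ 2) *
          ∑ m ∈ range (k + 1), ∑ n ∈ range (k + 1), ww k t m * ww k t n * SSk k t m n := by
  have h1 : (fun H : ℕ => (Nat.factorial H : ℝ) * (cc k t H) ^ 2)
      = fun H => ∑ m ∈ range (k + 1), ∑ n ∈ range (k + 1),
          (ww k t m * ww k t n) * ((Nat.factorial H : ℝ) * (gg t m H * gg t n H)) :=
    funext (cc_sq_expand k t)
  rw [h1]
  rw [Summable.tsum_finsetSum (f := fun (m : ℕ) (H : ℕ) => ∑ n ∈ range (k + 1),
        (ww k t m * ww k t n) * ((Nat.factorial H : ℝ) * (gg t m H * gg t n H)))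
      (fun m _ => summable_sum (fun n _ => (lemA_summable t m n).mul_left _))]
  rw [Finset.mul_sum]
  apply Finset.sum_congr rfl
  intro m hm
  rw [Summable.tsum_finsetSum (f := fun (n : ℕ) (H : ℕ) =>
        (ww k t m * ww k t n) * ((Nat.factorial H : ℝ) * (gg t m H * gg t n H)))
      (fun n _ => (lemA_summable t m n).mul_left _)]
  rw [Finset.mul_sum]
  apply Finset.sum_congr rfl
  intro n hn
  rw [tsum_mul_left, lemA_tsum t (by simpa using mem_range.mp hm |> Nat.lt_succ_iff.mp)
    (by simpa using mem_range.mp hn |> Nat.lt_succ_iff.mp)]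
  ring

private lemma key_B (k : ℕ) (t : ℝ) {i : ℕ} (hi : i ≤ k) :
    ∑ m ∈ range (k + 1), uu k t m i = if i = k then 1 else 0 := by
  have h1 : ∑ m ∈ range (k + 1), uu k t m i = ∑ m ∈ Finset.Ico i (k + 1), uu k t m i := by
    symm
    apply Finset.sum_subset
    · intro m hm
      simp only [Finset.mem_Ico] at hm
      exact mem_range.mpr (by omega)
    · intro m hmr hm
      simp only [Finset.mem_Ico, not_and, not_lt] at hm
      have hmk := mem_range.mp hmr
      have hmi : m < i := by
        by_contra hcon
        push_neg at hcon
        have := hm hcon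
        omega
      unfold uu
      rw [Nat.choose_eq_zero_of_lt hmi]
      ring
  rw [h1, Finset.sum_Ico_eq_sum_range]
  have hK : k + 1 - i = (k - i) + 1 := by omega
  rw [hK]
  set K := k - i with hKdef
  have hstep : ∀ j ∈ range (K + 1),
      uu k t (i + j) i = ((k.choose i : ℝ) * t ^ K) * ((-1) ^ K * ((-1) ^ j * (K.choose j : ℝ))) := by
    intro j hj
    have hjK : j ≤ K := by simp only [mem_range] at hj; omega
    unfold uu ww
    have e1 : i + j - i = j := by omega
    have e2 : k - (i + j) = K - j := by omega
    rw [e1, e2]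
    have hc : (k.choose (i + j) : ℝ) * ((i + j).choose i : ℝ)
        = (k.choose i : ℝ) * (K.choose j : ℝ) := by
      have := Nat.choose_mul (n := k) (show i ≤ i + j by omega)
      have h2 : (i + j) - i = j := by omega
      rw [h2] at this
      exact_mod_cast this
    have hsign : (-1 : ℝ) ^ (K - j) = (-1) ^ K * (-1) ^ j := by
      have ha : (-1 : ℝ) ^ (K - j) * (-1) ^ j = (-1) ^ K := by
        rw [← pow_add, Nat.sub_add_cancel hjK]
      have hb : (-1 : ℝ) ^ j * (-1) ^ j = 1 := by
        rw [← mul_pow]; norm_num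
      calc (-1 : ℝ) ^ (K - j) = (-1) ^ (K - j) * ((-1) ^ j * (-1) ^ j) := by rw [hb, mul_one]
        _ = ((-1) ^ (K - j) * (-1) ^ j) * (-1) ^ j := by ring
        _ = (-1) ^ K * (-1) ^ j := by rw [ha]
    have hpow : t ^ (K - j) * t ^ j = t ^ K := by
      rw [← pow_add, Nat.sub_add_cancel hjK]
    calc (-1 : ℝ) ^ (K - j) * (k.choose (i + j) : ℝ) * t ^ (K - j) * ((i + j).choose i : ℝ) * t ^ j
        = ((-1 : ℝ) ^ (K - j)) * ((k.choose (i + j) : ℝ) * ((i + j).choose i : ℝ)) *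
          (t ^ (K - j) * t ^ j) := by ring
      _ = ((-1) ^ K * (-1) ^ j) * ((k.choose i : ℝ) * (K.choose j : ℝ)) * t ^ K := by
          rw [hsign, hc, hpow]
      _ = ((k.choose i : ℝ) * t ^ K) * ((-1) ^ K * ((-1) ^ j * (K.choose j : ℝ))) := by ring
  rw [Finset.sum_congr rfl hstep, ← Finset.mul_sum, ← Finset.mul_sum]
  have halt : ∑ j ∈ range (K + 1), ((-1 : ℝ) ^ j * (K.choose j : ℝ)) = if K = 0 then 1 else 0 := by
    have := Int.alternating_sum_range_choose (n := K)
    have h2 : ((∑ m ∈ range (K + 1), ((-1 : ℤ) ^ m * K.choose m) : ℤ) : ℝ)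
        = ∑ j ∈ range (K + 1), ((-1 : ℝ) ^ j * (K.choose j : ℝ)) := by push_cast; rfl
    rw [← h2, this]
    split <;> norm_num
  rw [halt]
  by_cases hik : i = k
  · subst hik
    simp [hKdef]
  · have hK0 : K ≠ 0 := by omega
    rw [if_neg hK0, if_neg hik]
    ring

private lemma lemB (k : ℕ) (t : ℝ) :
    ∑ m ∈ range (k + 1), ∑ n ∈ range (k + 1), ww k t m * ww k t n * SSk k t m n
      = Nat.factorial k := by
  have h1 : ∀ m n : ℕ, ww k t m * ww k t n * SSk k t m n
      = ∑ i ∈ range (k + 1), uu k t m i * uu k t n i * Nat.factorial i := by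
    intro m n
    unfold SSk
    rw [Finset.mul_sum]
    apply Finset.sum_congr rfl
    intro i _
    simp only [uu]
    ring
  have h2 : ∀ m ∈ range (k + 1),
      ∑ n ∈ range (k + 1), ww k t m * ww k t n * SSk k t m n
        = ∑ i ∈ range (k + 1), uu k t m i * Nat.factorial i * (if i = k then 1 else 0) := by
    intro m _
    rw [Finset.sum_congr rfl (fun n _ => h1 m n), Finset.sum_comm]
    apply Finset.sum_congr rfl
    intro i hi
    have hik : i ≤ k := by have := mem_range.mp hi; omega
    have : ∑ n ∈ range (k + 1), uu k t m i * uu k t n i * Nat.factorial i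
        = uu k t m i * Nat.factorial i * ∑ n ∈ range (k + 1), uu k t n i := by
      rw [Finset.mul_sum]
      apply Finset.sum_congr rfl
      intro n _
      ring
    rw [this, key_B k t hik]
  rw [Finset.sum_congr rfl h2, Finset.sum_comm]
  have h3 : ∀ i ∈ range (k + 1),
      ∑ m ∈ range (k + 1), uu k t m i * Nat.factorial i * (if i = k then 1 else 0)
        = if i = k then (Nat.factorial k : ℝ) else 0 := by
    intro i hi
    have hik : i ≤ k := by have := mem_range.mp hi; omega
    have : ∑ m ∈ range (k + 1), uu k t m i * Nat.factorial i * (if i = k then 1 else 0)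
        = (∑ m ∈ range (k + 1), uu k t m i) * Nat.factorial i * (if i = k then 1 else 0) := by
      rw [Finset.sum_mul, Finset.sum_mul]
    rw [this, key_B k t hik]
    by_cases h : i = k
    · subst h; simp
    · simp [h]
  rw [Finset.sum_congr rfl h3,
    Finset.sum_ite_eq' (range (k + 1)) k (fun _ => (Nat.factorial k : ℝ))]
  rw [if_pos (mem_range.mpr (by omega))]

private lemma pointwise (t : ℝ) {h k : ℕ} (hk : k ≤ h) :
    (Nat.factorial h : ℝ) * cc k t h
      = (Nat.factorial k : ℝ) * t ^ (h - k) * lag k (h - k) (t ^ 2) := by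
  have hkh : k + (h - k) = h := by omega
  unfold lag cc
  rw [hkh, Finset.mul_sum, Finset.mul_sum, ← Finset.sum_range_reflect
    (fun m => (Nat.factorial h : ℝ) * (ww k t m * gg t m h)) (k + 1)]
  apply Finset.sum_congr rfl
  intro i hi
  have hik : i ≤ k := by have := mem_range.mp hi; omega
  simp only [Nat.add_sub_cancel]
  unfold ww gg
  rw [if_pos (show k - i ≤ h by omega)]
  have e1 : k - (k - i) = i := by omega
  have e2 : h - (k - i) = h - k + i := by omega
  rw [e1, e2]
  have hnat : Nat.factorial h * (k.choose (k - i)) * Nat.factorial i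
      = Nat.factorial k * (h.choose (k - i)) * Nat.factorial (h - k + i) := by
    have e3 := Nat.choose_mul_factorial_mul_factorial (show k - i ≤ k by omega)
    rw [e1] at e3
    have e4 := Nat.choose_mul_factorial_mul_factorial (show k - i ≤ h by omega)
    rw [e2] at e4
    have := Nat.factorial_pos (k - i)
    apply Nat.eq_of_mul_eq_mul_right this
    calc Nat.factorial h * (k.choose (k - i)) * Nat.factorial i * Nat.factorial (k - i)
        = Nat.factorial h * (k.choose (k - i) * Nat.factorial (k - i) * Nat.factorial i) := by ring
      _ = Nat.factorial h * Nat.factorial k := by rw [e3]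
      _ = Nat.factorial k * (h.choose (k - i) * Nat.factorial (k - i) *
            Nat.factorial (h - k + i)) := by rw [e4]; ring
      _ = Nat.factorial k * (h.choose (k - i)) * Nat.factorial (h - k + i) *
            Nat.factorial (k - i) := by ring
  have hnatR : (Nat.factorial h : ℝ) * (k.choose (k - i)) * Nat.factorial i
      = (Nat.factorial k : ℝ) * (h.choose (k - i)) * Nat.factorial (h - k + i) := by
    exact_mod_cast hnat
  have hpow : t ^ i * t ^ (h - k + i) = t ^ (h - k) * (t ^ 2) ^ i := by
    rw [← pow_mul, ← pow_add, ← pow_add]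
    congr 1
    omega
  have hf1 : (Nat.factorial (h - k + i) : ℝ) ≠ 0 := by positivity
  have hf2 : (Nat.factorial i : ℝ) ≠ 0 := by positivity
  have hcs : ((k.choose (k - i) : ℝ)) = (k.choose i : ℝ) := by
    exact_mod_cast congrArg (fun x : ℕ => (x : ℝ)) (Nat.choose_symm hik)
  field_simp
  linear_combination (t ^ i * t ^ (h - k + i)) * hnatR
    + ((Nat.factorial k : ℝ) * (h.choose (k - i)) * (Nat.factorial (h - k + i) : ℝ)) * hpow

/-- The squared modulus of the overlap of two displaced number states `|ξ,h⟩`, `|μ,k⟩`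
(`h ≥ k`, `z = μ - ξ`) equals `(k!/h!)·|z|^(2(h-k))·e^(-|z|²)·(L_k^{(h-k)}(|z|²))²`,
and this quantity always lies in `[0,1]`. -/
theorem overlap_sq_mem_Icc (h k : ℕ) (hk : k ≤ h) (z : ℂ) :
    (Nat.factorial k : ℝ) / (Nat.factorial h) * (‖z‖) ^ (2 * (h - k)) *
      Real.exp (-(‖z‖) ^ 2) * (lag k (h - k) ((‖z‖) ^ 2)) ^ 2
      ∈ Set.Icc (0 : ℝ) 1 := by
  set t : ℝ := ‖z‖ with ht
  have htnn : 0 ≤ t := norm_nonneg z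
  have hfh : (Nat.factorial h : ℝ) ≠ 0 := by positivity
  have hfk : (Nat.factorial k : ℝ) ≠ 0 := by positivity
  constructor
  · have : (0 : ℝ) ≤ (Nat.factorial k : ℝ) / (Nat.factorial h) * t ^ (2 * (h - k)) *
        Real.exp (-t ^ 2) * (lag k (h - k) (t ^ 2)) ^ 2 := by
      apply mul_nonneg
      apply mul_nonneg
      apply mul_nonneg
      · positivity
      · exact pow_nonneg htnn _
      · exact (Real.exp_pos _).le
      · exact sq_nonneg _
    exact this
  · -- upper bound
    have hb : (Nat.factorial h : ℝ) * (cc k t h) ^ 2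
        ≤ Real.exp (t ^ 2) * Nat.factorial k := by
      have hle := Summable.le_tsum (main_summable k t) h (fun j _ => by positivity)
      rw [main_tsum k t, lemB k t] at hle
      exact hle
    have hpt := pointwise t hk
    have hE : (Nat.factorial k : ℝ) / (Nat.factorial h) * t ^ (2 * (h - k)) *
        Real.exp (-t ^ 2) * (lag k (h - k) (t ^ 2)) ^ 2
        = Real.exp (-t ^ 2) / (Nat.factorial k) *
            ((Nat.factorial h : ℝ) * (cc k t h) ^ 2) := by
      rw [mul_comm 2 (h - k), pow_mul]
      have hne : (Nat.factorial k : ℝ) * (Nat.factorial h : ℝ) ≠ 0 := by positivity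
      field_simp
      linear_combination (-1 : ℝ) *
        ((Nat.factorial h : ℝ) * cc k t h + (Nat.factorial k : ℝ) * t ^ (h - k) *
          lag k (h - k) (t ^ 2)) * hpt
    calc (Nat.factorial k : ℝ) / (Nat.factorial h) * t ^ (2 * (h - k)) *
          Real.exp (-t ^ 2) * (lag k (h - k) (t ^ 2)) ^ 2
        = Real.exp (-t ^ 2) / (Nat.factorial k) *
            ((Nat.factorial h : ℝ) * (cc k t h) ^ 2) := hE
      _ ≤ Real.exp (-t ^ 2) / (Nat.factorial k) * (Real.exp (t ^ 2) * Nat.factorial k) := by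
          apply mul_le_mul_of_nonneg_left hb
          positivity
      _ = 1 := by
          rw [Real.exp_neg]
          field_simp
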